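/- Let d ≥ 2, n > d, and let 0 ≤ k ≤ d − 1 be an integer. Let c_1, …, c_{n−k} be real numbers with pairwise distinct fractional parts. Consider the n subtori of T^d = ℝ^d/ℤ^d that are the images under φ of the hyperplanes x_i = 0 for 1 ≤ i ≤ k and x_{k+1} = c_j for 1 ≤ j ≤ n − k. Then the complement in T^d of the union of these n subtori has exactly n − k connected components. -/

import Mathlib

open scoped BigOperators

noncomputable section

/-- The flat `d`-dimensional torus `ℝ^d / ℤ^d`, modeled as a product of circles `ℝ/ℤ`. -/
abbrev FlatTorus (d : ℕ) := Fin d → AddCircle (1 : ℝ)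

/-- The quotient map `φ : ℝ^d → T^d`. -/
def torusQuot (d : ℕ) : (Fin d → ℝ) → FlatTorus d := fun x i => (x i : AddCircle (1 : ℝ))

/-- A closed codimension-one subtorus of `T^d`: the image under `φ` of an affine hyperplane
`{x | ∑ i, a i * x i = c}` with `a` a primitive integer vector. -/
def IsCodimOneSubtorus {d : ℕ} (A : Set (FlatTorus d)) : Prop :=
  ∃ (a : Fin d → ℤ) (c : ℝ),
    Finset.univ.gcd a = 1 ∧
    A = torusQuot d '' {x | ∑ i, (a i : ℝ) * x i = c}

namespace CCAux

open Set AddCircle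

/-- canonical representative in `[0,1)` of a point of `ℝ/ℤ`. -/
def rep (z : AddCircle (1:ℝ)) : ℝ := (AddCircle.equivIco 1 0 z : ℝ)

lemma rep_mem (z : AddCircle (1:ℝ)) : rep z ∈ Set.Ico (0:ℝ) 1 := by
  have h := (AddCircle.equivIco 1 0 z).2
  simpa [rep] using h

lemma coe_rep (z : AddCircle (1:ℝ)) : ((rep z : ℝ) : AddCircle (1:ℝ)) = z :=
  (AddCircle.equivIco 1 0).symm_apply_apply z

lemma rep_coe (x : ℝ) : rep (x : AddCircle (1:ℝ)) = Int.fract x := by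
  have := AddCircle.coe_equivIco_mk_apply (1:ℝ) x
  simpa [rep] using this

lemma rep_injective : Function.Injective rep := fun z w h => by
  rw [← coe_rep z, ← coe_rep w, h]

lemma rep_zero : rep (0 : AddCircle (1:ℝ)) = 0 := by
  have : ((0:ℝ) : AddCircle (1:ℝ)) = 0 := by norm_cast
  rw [← this, rep_coe]; simp

lemma continuousAt_rep {z : AddCircle (1:ℝ)} (hz : z ≠ 0) : ContinuousAt rep z := by
  have h0 : z ≠ (((0:ℝ)) : AddCircle (1:ℝ)) := by simpa using hz
  exact continuous_subtype_val.continuousAt.comp (AddCircle.continuousAt_equivIco 1 0 h0)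


/-- directed circular distance from `w` to `z`. -/
def delta (w z : AddCircle (1:ℝ)) : ℝ := rep (z - w)

lemma delta_mem (w z : AddCircle (1:ℝ)) : delta w z ∈ Set.Ico (0:ℝ) 1 := rep_mem _

lemma coe_delta (w z : AddCircle (1:ℝ)) : ((delta w z : ℝ) : AddCircle (1:ℝ)) = z - w :=
  coe_rep _

lemma delta_eq_zero_iff {w z : AddCircle (1:ℝ)} : delta w z = 0 ↔ z = w := by
  constructor
  · intro h
    have : ((delta w z : ℝ) : AddCircle (1:ℝ)) = z - w := coe_delta w z
    rw [h] at this
    have h0 : (((0:ℝ)) : AddCircle (1:ℝ)) = 0 := by norm_cast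
    rw [h0] at this
    have := this.symm
    rwa [sub_eq_zero] at this
  · rintro rfl
    simp [delta, sub_self, rep_zero]

lemma delta_pos {w z : AddCircle (1:ℝ)} (h : z ≠ w) : 0 < delta w z :=
  lt_of_le_of_ne (delta_mem w z).1 (fun h' => h (delta_eq_zero_iff.mp h'.symm))

lemma delta_lt_one (w z : AddCircle (1:ℝ)) : delta w z < 1 := (delta_mem w z).2

lemma delta_injective {v w z : AddCircle (1:ℝ)} (h : delta v z = delta w z) : v = w := by
  have := rep_injective h
  have h2 : z - v = z - w := this
  have := sub_right_injective h2
  exact this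

lemma continuousAt_delta {w z : AddCircle (1:ℝ)} (hz : z ≠ w) : ContinuousAt (delta w) z := by
  have h1 : ContinuousAt (fun z : AddCircle (1:ℝ) => z - w) z :=
    (continuous_id.sub continuous_const).continuousAt
  have h2 : ContinuousAt rep (z - w) := continuousAt_rep (sub_ne_zero.mpr hz)
  exact ContinuousAt.comp (g := rep) (f := fun z => z - w) h2 h1

/-- The key computation. -/
lemma delta_add (v w : AddCircle (1:ℝ)) (e : ℝ) :
    delta v (w + (e : AddCircle (1:ℝ))) = Int.fract (delta v w + e) := by
  have h1 : ((delta v w + e : ℝ) : AddCircle (1:ℝ)) = ((delta v w : ℝ) : AddCircle (1:ℝ)) + (e : AddCircle (1:ℝ)) := by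
    exact AddCircle.coe_add (p := (1:ℝ)) _ _
  have : (w + (e : AddCircle (1:ℝ))) - v = ((delta v w + e : ℝ) : AddCircle (1:ℝ)) := by
    rw [h1, coe_delta]
    abel
  rw [delta, this, rep_coe]

lemma delta_add_self (w : AddCircle (1:ℝ)) {e : ℝ} (he : e ∈ Set.Ico (0:ℝ) 1) :
    delta w (w + (e : AddCircle (1:ℝ))) = e := by
  have h0 : delta w w = (0:ℝ) := delta_eq_zero_iff.mpr rfl
  rw [delta_add, h0, zero_add, Int.fract_eq_self.mpr ⟨he.1, he.2⟩]


open Set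

lemma aux_card (d m : ℕ) (hm : 0 < m) (K : Fin d) (I : Set (Fin d)) (hKI : K ∉ I)
    (C : Fin m → AddCircle (1:ℝ)) (hC : Function.Injective C) :
    Nat.card (ConnectedComponents
      ↥{y : Fin d → AddCircle (1:ℝ) | (∀ i ∈ I, y i ≠ 0) ∧ ∀ j, y K ≠ C j}) = m := by
  classical
  haveI : Nonempty (Fin m) := ⟨⟨0, hm⟩⟩
  set S : Set (Fin d → AddCircle (1:ℝ)) :=
    {y | (∀ i ∈ I, y i ≠ 0) ∧ ∀ j, y K ≠ C j} with hSdef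
  -- distinctness of the marked points
  have hCC : ∀ {i j : Fin m}, i ≠ j → C i ≠ C j := fun hij h => hij (hC h)
  -- coordinate K of a point of S avoids all marked points
  have hD : ∀ (y : ↥S) (i : Fin m), y.1 K ≠ C i := fun y i => y.2.2 i
  -- existence of a strict minimizer
  have hminex : ∀ y : ↥S, ∃ j, ∀ i, i ≠ j →
      delta (C j) (y.1 K) < delta (C i) (y.1 K) := by
    intro y
    obtain ⟨j, -, hj⟩ := Finset.exists_min_image Finset.univ
      (fun j => delta (C j) (y.1 K)) Finset.univ_nonempty
    refine ⟨j, fun i hi => lt_of_le_of_ne (hj i (Finset.mem_univ i)) (fun h => ?_)⟩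
    exact hi (hC (delta_injective h)).symm
  set Φ : ↥S → Fin m := fun y => Classical.choose (hminex y) with hΦdef
  have hΦ : ∀ y : ↥S, ∀ i, i ≠ Φ y →
      delta (C (Φ y)) (y.1 K) < delta (C i) (y.1 K) :=
    fun y => Classical.choose_spec (hminex y)
  have hunique : ∀ (y : ↥S) (j : Fin m),
      (∀ i, i ≠ j → delta (C j) (y.1 K) < delta (C i) (y.1 K)) → Φ y = j := by
    intro y j hj
    by_contra hne
    exact lt_asymm (hj (Φ y) (fun h => hne h)) (hΦ y j (fun h => hne h.symm))
  -- the interval description of the fiber condition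
  have key : ∀ (z : AddCircle (1:ℝ)) (j i : Fin m), i ≠ j → z ≠ C j →
      (delta (C j) z < delta (C i) z ↔ delta (C j) z < 1 - delta (C i) (C j)) := by
    intro z j i hij hzj
    set e := delta (C j) z with he
    set a := delta (C i) (C j) with ha
    have hepos : 0 < e := delta_pos hzj
    have he1 : e < 1 := delta_lt_one _ _
    have hapos : 0 < a := delta_pos (fun h => hij (hC h).symm)
    have ha1 : a < 1 := delta_lt_one _ _
    have hz : z = C j + ((e : ℝ) : AddCircle (1:ℝ)) := by
      rw [he, coe_delta]; abel
    have hdiz : delta (C i) z = Int.fract (a + e) := by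
      conv_lhs => rw [hz]
      rw [delta_add, ← ha]
    rcases lt_or_ge (a + e) 1 with hae | hae
    · rw [hdiz, Int.fract_eq_self.mpr ⟨by linarith, hae⟩]
      constructor <;> intro <;> linarith
    · have hfr : Int.fract (a + e) = a + e - 1 := by
        have h1 : Int.fract ((a + e - 1) + (1:ℤ)) = Int.fract (a + e - 1) :=
          Int.fract_add_intCast _ _
        have h2 : Int.fract (a + e - 1) = a + e - 1 :=
          Int.fract_eq_self.mpr ⟨by linarith, by linarith⟩
        have h3 : ((a + e - 1) + ((1:ℤ):ℝ)) = a + e := by push_cast; ring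
        rw [h3] at h1
        rw [h1, h2]
      rw [hdiz, hfr]
      constructor <;> intro <;> linarith
  -- continuity of Φ
  have hevK : Continuous (fun y' : ↥S => y'.1 K) :=
    (continuous_apply K).comp continuous_subtype_val
  have hopen : ∀ j, IsOpen (Φ ⁻¹' {j}) := by
    intro j
    rw [isOpen_iff_mem_nhds]
    intro y hy
    have hy' : Φ y = j := hy
    have hevent : ∀ᶠ y' : ↥S in nhds y, ∀ i, i ≠ j →
        delta (C j) (y'.1 K) < delta (C i) (y'.1 K) := by
      rw [Filter.eventually_all]
      intro i
      by_cases hij : i = j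
      · subst hij
        exact Filter.Eventually.of_forall (fun y' h => absurd rfl h)
      · have hki : ContinuousAt (fun y' : ↥S => delta (C i) (y'.1 K)) y :=
          ContinuousAt.comp (g := delta (C i)) (continuousAt_delta (hD y i))
            hevK.continuousAt
        have hkj : ContinuousAt (fun y' : ↥S => delta (C j) (y'.1 K)) y :=
          ContinuousAt.comp (g := delta (C j)) (continuousAt_delta (hD y j))
            hevK.continuousAt
        have hlt : delta (C j) (y.1 K) < delta (C i) (y.1 K) := by
          rw [← hy']; exact hΦ y i (by rw [hy']; exact hij)
        filter_upwards [hkj.eventually_lt hki hlt] with y' h' _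
        exact h'
    have : ∀ᶠ y' : ↥S in nhds y, Φ y' = j :=
      hevent.mono (fun y' h' => hunique y' j h')
    exact this
  have hcont : Continuous Φ := by
    refine continuous_def.mpr (fun s _ => ?_)
    have : Φ ⁻¹' s = ⋃ j ∈ s, Φ ⁻¹' {j} := by
      ext y; simp
    rw [this]
    exact isOpen_biUnion (fun j _ => hopen j)
  -- boxes in ℝ^d
  set B : Fin m → Set (Fin d → ℝ) := fun j =>
    (⋂ i ∈ I, {x : Fin d → ℝ | x i ∈ Ioo (0:ℝ) 1}) ∩
      {x : Fin d → ℝ | x K ∈ Ioo (0:ℝ) 1} ∩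
      ⋂ i ∈ {i : Fin m | i ≠ j}, {x : Fin d → ℝ | x K ∈ Iio (1 - delta (C i) (C j))}
    with hBdef
  have hBmem : ∀ (j : Fin m) (x : Fin d → ℝ),
      x ∈ B j ↔ (∀ i ∈ I, x i ∈ Ioo (0:ℝ) 1) ∧ x K ∈ Ioo (0:ℝ) 1 ∧
        ∀ i, i ≠ j → x K < 1 - delta (C i) (C j) := by
    intro j x
    simp only [hBdef, mem_inter_iff, mem_iInter, mem_setOf_eq, mem_Iio]
    tauto
  -- projections of the torus
  have hcoordconv : ∀ (i : Fin d) (s : Set ℝ), Convex ℝ s →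
      Convex ℝ {x : Fin d → ℝ | x i ∈ s} := by
    intro i s hs
    have h : {x : Fin d → ℝ | x i ∈ s} =
        (LinearMap.proj i : (Fin d → ℝ) →ₗ[ℝ] ℝ) ⁻¹' s := rfl
    rw [h]
    exact hs.linear_preimage _
  have hBconv : ∀ j, Convex ℝ (B j) := by
    intro j
    refine Convex.inter (Convex.inter ?_ (hcoordconv K _ (convex_Ioo 0 1))) ?_
    · exact convex_iInter₂ (fun i _ => hcoordconv i _ (convex_Ioo 0 1))
    · exact convex_iInter₂ (fun i _ => hcoordconv K _ (convex_Iio _))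
  -- the parametrizations
  set G : Fin m → (Fin d → ℝ) → (Fin d → AddCircle (1:ℝ)) := fun j x i =>
    if i = K then C j + ((x K : ℝ) : AddCircle (1:ℝ)) else ((x i : ℝ) : AddCircle (1:ℝ))
    with hGdef
  have hGcont : ∀ j, Continuous (G j) := by
    intro j
    refine continuous_pi (fun i => ?_)
    by_cases h : i = K
    · simp only [hGdef, h, if_pos]
      exact continuous_const.add
        ((AddCircle.continuous_mk' 1).comp (continuous_apply K))
    · simp only [hGdef, if_neg h]
      exact (AddCircle.continuous_mk' 1).comp (continuous_apply i)
  -- image points of boxes lie in the fibers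
  have hGmem : ∀ (j : Fin m) (x : Fin d → ℝ), x ∈ B j →
      ∃ h : G j x ∈ S, Φ ⟨G j x, h⟩ = j := by
    intro j x hx
    rw [hBmem] at hx
    obtain ⟨hxI, hxK, hxj⟩ := hx
    set e : ℝ := x K with hedef
    set z : AddCircle (1:ℝ) := C j + ((e : ℝ) : AddCircle (1:ℝ)) with hzdef
    have hzK : G j x K = z := by simp [hGdef, hzdef]; rfl
    have hde : delta (C j) z = e := delta_add_self _ ⟨hxK.1.le, hxK.2⟩
    have hdi : ∀ i, i ≠ j → delta (C i) z = delta (C i) (C j) + e := by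
      intro i hij
      have hapos : 0 < delta (C i) (C j) := delta_pos (hCC (Ne.symm hij))
      rw [hzdef, delta_add]
      exact Int.fract_eq_self.mpr ⟨by linarith [hxK.1], by linarith [hxj i hij]⟩
    have hzne : ∀ i, z ≠ C i := by
      intro i
      by_cases hij : i = j
      · subst hij
        intro h
        rw [← delta_eq_zero_iff] at h
        rw [hde] at h
        linarith [hxK.1]
      · intro h
        rw [← delta_eq_zero_iff] at h
        rw [hdi i hij] at h
        have hapos : 0 < delta (C i) (C j) := delta_pos (hCC (Ne.symm hij))
        linarith [hxK.1]
    have hmem : G j x ∈ S := by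
      constructor
      · intro i hi
        have hik : i ≠ K := fun h => hKI (h ▸ hi)
        simp only [hGdef, if_neg hik]
        intro h0
        rw [AddCircle.coe_eq_zero_iff_of_mem_Ico ⟨(hxI i hi).1.le, (hxI i hi).2⟩] at h0
        exact ne_of_gt (hxI i hi).1 h0
      · intro i
        rw [hzK]
        exact hzne i
    refine ⟨hmem, hunique _ j ?_⟩
    intro i hij
    show delta (C j) (G j x K) < delta (C i) (G j x K)
    rw [hzK, hde, hdi i hij]
    have hapos : 0 < delta (C i) (C j) := delta_pos (hCC (Ne.symm hij))
    linarith
  -- the fibers are exactly the images of the boxes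
  have hfib : ∀ j, Subtype.val '' (Φ ⁻¹' {j}) = G j '' (B j) := by
    intro j
    apply Set.Subset.antisymm
    · rintro _ ⟨y, hy, rfl⟩
      have hy' : Φ y = j := hy
      have hepos : 0 < delta (C j) (y.1 K) := delta_pos (hD y j)
      have he1 : delta (C j) (y.1 K) < 1 := delta_lt_one _ _
      refine ⟨fun i => if i = K then delta (C j) (y.1 K) else rep (y.1 i), ?_, ?_⟩
      · rw [hBmem]
        refine ⟨?_, ?_, ?_⟩
        · intro i hi
          have hik : i ≠ K := fun h => hKI (h ▸ hi)
          simp only [if_neg hik]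
          have h0 : rep (y.1 i) ≠ 0 := by
            intro h
            apply y.2.1 i hi
            rw [← coe_rep (y.1 i), h]
            norm_cast
          exact ⟨lt_of_le_of_ne (rep_mem _).1 (Ne.symm h0), (rep_mem _).2⟩
        · simp only [eq_self_iff_true, if_true]
          exact ⟨hepos, he1⟩
        · intro i hij
          simp only [eq_self_iff_true, if_true]
          rw [← key (y.1 K) j i hij (hD y j), ← hy']
          exact hΦ y i (by rw [hy']; exact hij)
      · funext i
        by_cases h : i = K
        · subst h
          simp only [hGdef, eq_self_iff_true, if_true]
          rw [coe_delta]
          abel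
        · simp only [hGdef, if_neg h]
          exact coe_rep _
    · rintro _ ⟨x, hx, rfl⟩
      obtain ⟨hmem, hΦeq⟩ := hGmem j x hx
      exact ⟨⟨G j x, hmem⟩, hΦeq, rfl⟩
  -- the fibers are preconnected
  have hfibconn : ∀ j, IsPreconnected (Φ ⁻¹' {j} : Set ↥S) := by
    intro j
    rw [← Topology.IsInducing.subtypeVal.isPreconnected_image]
    rw [hfib j]
    exact ((hBconv j).isPreconnected).image _ (hGcont j).continuousOn
  -- the boxes are nonempty, so Φ is surjective
  have hsurj : Function.Surjective Φ := by
    intro j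
    set ε : ℝ := (Finset.univ.inf' Finset.univ_nonempty
      (fun i => if i = j then (1:ℝ) else 1 - delta (C i) (C j))) / 2 with hεdef
    have hεpos : 0 < ε := by
      rw [hεdef]
      apply half_pos
      rw [Finset.lt_inf'_iff]
      intro i _
      by_cases h : i = j
      · simp [h]
      · simp only [if_neg h]
        linarith [delta_lt_one (C i) (C j)]
    have hεhalf : ε ≤ 1 / 2 := by
      rw [hεdef]
      have := Finset.inf'_le (b := j)
        (fun i => if i = j then (1:ℝ) else 1 - delta (C i) (C j)) (Finset.mem_univ j)
      simp only [eq_self_iff_true, if_true] at this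
      linarith
    have hεlt : ∀ i, i ≠ j → ε < 1 - delta (C i) (C j) := by
      intro i hij
      have h1 := Finset.inf'_le (b := i)
        (fun i' => if i' = j then (1:ℝ) else 1 - delta (C i') (C j)) (Finset.mem_univ i)
      simp only [if_neg hij] at h1
      have hapos : 0 < delta (C i) (C j) := delta_pos (hCC (Ne.symm hij))
      have ha1 : delta (C i) (C j) < 1 := delta_lt_one _ _
      rw [hεdef]
      linarith
    set x : Fin d → ℝ := fun i => if i = K then ε else 1/2 with hxdef
    have hxB : x ∈ B j := by
      rw [hBmem]
      refine ⟨?_, ?_, ?_⟩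
      · intro i hi
        have hik : i ≠ K := fun h => hKI (h ▸ hi)
        simp only [hxdef, if_neg hik]
        norm_num
      · simp only [hxdef, eq_self_iff_true, if_true]
        exact ⟨hεpos, by linarith⟩
      · intro i hij
        simp only [hxdef, eq_self_iff_true, if_true]
        exact hεlt i hij
    obtain ⟨hmem, hΦeq⟩ := hGmem j x hxB
    exact ⟨⟨G j x, hmem⟩, hΦeq⟩
  -- assemble
  have hbij : Function.Bijective hcont.connectedComponentsLift := by
    constructor
    · intro a b hab
      obtain ⟨y, rfl⟩ := ConnectedComponents.surjective_coe a
      obtain ⟨z, rfl⟩ := ConnectedComponents.surjective_coe b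
      rw [hcont.connectedComponentsLift_apply_coe,
        hcont.connectedComponentsLift_apply_coe] at hab
      have hyz : z ∈ connectedComponent y := by
        have h1 : y ∈ (Φ ⁻¹' {Φ y} : Set ↥S) := rfl
        have h2 : z ∈ (Φ ⁻¹' {Φ y} : Set ↥S) := by
          simp only [mem_preimage, mem_singleton_iff, hab]
        exact (hfibconn (Φ y)).subset_connectedComponent h1 h2
      exact ConnectedComponents.coe_eq_coe.mpr (connectedComponent_eq hyz)
    · intro j
      obtain ⟨y, hy⟩ := hsurj j
      exact ⟨ConnectedComponents.mk y, by
        rw [hcont.connectedComponentsLift_apply_coe]; exact hy⟩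
  rw [Nat.card_eq_of_bijective _ hbij]
  simp [Nat.card_eq_fintype_card]


lemma image_coord (d : ℕ) (i0 : Fin d) (r : ℝ) :
    torusQuot d '' {x | x i0 = r} = {y : FlatTorus d | y i0 = (r : AddCircle (1:ℝ))} := by
  ext y
  constructor
  · rintro ⟨x, hx, rfl⟩
    simp only [Set.mem_setOf_eq] at hx ⊢
    rw [torusQuot, hx]
  · intro hy
    refine ⟨fun i => if i = i0 then r else rep (y i), by simp, ?_⟩
    funext i
    by_cases h : i = i0
    · subst h
      simp only [torusQuot, eq_self_iff_true, if_true]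
      exact hy.symm
    · simp only [torusQuot, if_neg h]
      exact coe_rep _

end CCAux


/-- For `d ≥ 2`, `n > d`, `0 ≤ k ≤ d - 1`, and reals `c 1, …, c (n-k)` with pairwise
distinct fractional parts, the complement in `T^d` of the union of the subtori
`φ({x | x i = 0})` for `1 ≤ i ≤ k` and `φ({x | x (k+1) = c j})` for `1 ≤ j ≤ n - k`
has exactly `n - k` connected components. -/
theorem card_components_coordinate_arrangement
    (d n k : ℕ) (hd : 2 ≤ d) (hn : d < n) (hk : k ≤ d - 1)
    (c : Fin (n - k) → ℝ)
    (hc : ∀ i j, Int.fract (c i) = Int.fract (c j) → i = j) :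
    Nat.card (ConnectedComponents ↥(
      ((⋃ i : Fin k, torusQuot d '' {x | x ⟨i.1, by have := i.isLt; omega⟩ = 0}) ∪
       (⋃ j : Fin (n - k), torusQuot d '' {x | x ⟨k, by omega⟩ = c j}))ᶜ)) = n - k := by
  classical
  have hkd : k < d := by omega
  set K : Fin d := ⟨k, hkd⟩ with hK
  set I : Set (Fin d) := {i : Fin d | i.1 < k} with hI
  set C : Fin (n - k) → AddCircle (1:ℝ) := fun j => ((c j : ℝ) : AddCircle (1:ℝ)) with hCdef
  have hset : ((⋃ i : Fin k, torusQuot d '' {x | x ⟨i.1, by have := i.isLt; omega⟩ = 0}) ∪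
       (⋃ j : Fin (n - k), torusQuot d '' {x | x ⟨k, by omega⟩ = c j}))ᶜ
      = {y : Fin d → AddCircle (1:ℝ) | (∀ i ∈ I, y i ≠ 0) ∧ ∀ j, y K ≠ C j} := by
    ext y
    simp only [Set.mem_compl_iff, Set.mem_union, Set.mem_iUnion, CCAux.image_coord,
      Set.mem_setOf_eq, not_or, not_exists, hI, hK, hCdef]
    have h00 : (((0:ℝ)) : AddCircle (1:ℝ)) = 0 := by norm_cast
    constructor
    · rintro ⟨h1, h2⟩
      refine ⟨fun i hi => ?_, h2⟩
      have := h1 ⟨i.1, hi⟩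
      rw [h00] at this
      exact this
    · rintro ⟨h1, h2⟩
      refine ⟨fun i => ?_, h2⟩
      rw [h00]
      exact h1 ⟨i.1, by omega⟩ (by simpa using i.isLt)
  refine Eq.trans (congrArg (fun s : Set (FlatTorus d) =>
    Nat.card (ConnectedComponents ↥s)) hset) ?_
  refine CCAux.aux_card d (n - k) (by omega) K I (by simp [hI, hK]) C ?_
  intro i j h
  apply hc
  rw [← CCAux.rep_coe (c i), ← CCAux.rep_coe (c j)]
  exact congrArg CCAux.rep h
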